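/- arXiv:1312.7594 — 4 statements merged into one kernel-verified Lean document; each statement's English description precedes it below -/
import Mathlib

section
/- Let d ≥ 1, 0 < β < α < 2 and λ > 0. For a ∈ [0,1] define f_{a,λ}(s,z,y) := s^{−(d+β)/α} if |z−y| ≤ s^{1/α}, and f_{a,λ}(s,z,y) := |z−y|^{−(d+β)} 1_{|z−y|≤λ} + (|z−y|^{−(d+α)} + a|z−y|^{−(d+β)}) 1_{|z−y|>λ} if |z−y| > s^{1/α}. Then there exists C = C(d,α,β,λ) > 0 such that for all a ∈ [0,1], t > 0 and y ∈ ℝ^d, ∫₀^t ∫_{ℝ^d} f_{a,λ}(s,z,y) dz ds ≤ C (t^{1−β/α} + t). -/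
open Real MeasureTheory

private lemma rpow_neg_scale {c u p : ℝ} (hc : 0 < c) (hu : 0 < u) :
    u ^ (-p) = c ^ p * (c * u) ^ (-p) := by
  rw [Real.mul_rpow hc.le hu.le, ← mul_assoc, ← Real.rpow_add hc, add_neg_cancel,
    Real.rpow_zero, one_mul]

private lemma aux_radial (d : ℕ) (hd : 1 ≤ d) (p : ℝ) (hp : (d : ℝ) < p) :
    ∃ M > (0:ℝ), ∀ r > (0:ℝ),
      Integrable (fun x : EuclideanSpace ℝ (Fin d) =>
        if ‖x‖ ≤ r then r ^ (-p) else ‖x‖ ^ (-p)) ∧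
      (∫ x : EuclideanSpace ℝ (Fin d),
        (if ‖x‖ ≤ r then r ^ (-p) else ‖x‖ ^ (-p))) ≤ M * r ^ ((d:ℝ) - p) := by
  set E := EuclideanSpace ℝ (Fin d)
  haveI : Nontrivial E := by
    apply Module.nontrivial_of_finrank_pos (R := ℝ)
    rw [finrank_euclideanSpace_fin]; omega
  have hdim : Module.finrank ℝ E = d := finrank_euclideanSpace_fin
  have hd0 : (0:ℝ) < d := by exact_mod_cast hd
  have hpd : (0:ℝ) < p - d := by linarith
  have hp0 : (0:ℝ) < p := lt_trans hd0 hp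
  refine ⟨((d:ℝ) * (volume (Metric.ball (0:E) 1)).toReal) * (1/(d:ℝ) + 1/(p - d)),
    by
      have hball : 0 < (volume (Metric.ball (0:E) 1)).toReal :=
        ENNReal.toReal_pos (Metric.measure_ball_pos volume (0:E) one_pos).ne'
          measure_ball_lt_top.ne
      positivity, ?_⟩
  intro r hr
  set h : ℝ → ℝ := fun u => if u ≤ r then r ^ (-p) else u ^ (-p) with hh
  have hmeas : Measurable fun x : E => h ‖x‖ := by
    apply Measurable.ite (measurableSet_le measurable_norm measurable_const) measurable_const
    fun_prop
  have hint : Integrable (fun x : E => h ‖x‖) := by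
    have hc : (0:ℝ) < (1 + r) / r := by positivity
    refine Integrable.mono' (((integrable_one_add_norm (μ := volume) (E := E)
      (by rw [hdim]; exact hp)).const_mul (((1+r)/r) ^ p))) hmeas.aestronglyMeasurable
      (Filter.Eventually.of_forall fun x => ?_)
    have hx0 : (0:ℝ) < 1 + ‖x‖ := by positivity
    simp only [hh, Real.norm_eq_abs]
    by_cases hxr : ‖x‖ ≤ r
    · rw [if_pos hxr, abs_of_nonneg (Real.rpow_nonneg hr.le _), rpow_neg_scale hc hr]
      apply mul_le_mul_of_nonneg_left _ (Real.rpow_nonneg hc.le _)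
      apply Real.rpow_le_rpow_of_nonpos hx0 _ (by linarith)
      rw [div_mul_cancel₀ _ hr.ne']
      linarith
    · push_neg at hxr
      have hx1 : (0:ℝ) < ‖x‖ := lt_trans hr hxr
      rw [if_neg (not_le.mpr hxr), abs_of_nonneg (Real.rpow_nonneg hx1.le _),
        rpow_neg_scale hc hx1]
      apply mul_le_mul_of_nonneg_left _ (Real.rpow_nonneg hc.le _)
      apply Real.rpow_le_rpow_of_nonpos hx0 _ (by linarith)
      rw [div_mul_eq_mul_div, le_div_iff₀ hr, add_mul, one_mul, mul_comm ‖x‖ r]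
      nlinarith
  refine ⟨hint, le_of_eq ?_⟩
  rw [MeasureTheory.integral_fun_norm_addHaar (volume : Measure E) h, hdim]
  have hcast : ((d - 1 : ℕ) : ℝ) = (d:ℝ) - 1 := by
    rw [Nat.cast_sub hd]; norm_num
  have hsplit : ∫ y in Set.Ioi (0:ℝ), y ^ (d - 1) • h y
      = r ^ ((d:ℝ) - p) * (1/(d:ℝ) + 1/(p - d)) := by
    have hI1 : IntegrableOn (fun y : ℝ => y ^ (d - 1) • h y) (Set.Ioc 0 r) := by
      have hcont : Continuous fun y : ℝ => y ^ (d-1) * r ^ (-p) :=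
        (continuous_pow (d-1)).mul continuous_const
      refine (hcont.integrableOn_Ioc (a := 0) (b := r)).congr_fun
        (fun y hy => ?_) measurableSet_Ioc
      simp [hh, smul_eq_mul, hy.2]
    have hI2 : IntegrableOn (fun y : ℝ => y ^ (d - 1) • h y) (Set.Ioi r) := by
      refine (integrableOn_Ioi_rpow_of_lt (a := (d:ℝ) - 1 - p) (by linarith) hr).congr_fun
        (fun y hy => ?_) measurableSet_Ioi
      have hy0 : (0:ℝ) < y := lt_trans hr hy
      have hy1 : ¬ y ≤ r := not_le.mpr hy
      simp only [hh, smul_eq_mul, hy1, if_false]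
      rw [← Real.rpow_natCast y (d-1), ← Real.rpow_add hy0, hcast]
      ring_nf
    have hunion : Set.Ioc (0:ℝ) r ∪ Set.Ioi r = Set.Ioi 0 := Set.Ioc_union_Ioi_eq_Ioi hr.le
    rw [← hunion, MeasureTheory.setIntegral_union (Set.Ioc_disjoint_Ioi le_rfl)
      measurableSet_Ioi hI1 hI2]
    have hv1 : ∫ y in Set.Ioc (0:ℝ) r, y ^ (d - 1) • h y = r ^ ((d:ℝ) - p) / d := by
      rw [MeasureTheory.setIntegral_congr_fun measurableSet_Ioc
        (g := fun y : ℝ => y ^ (d-1) * r ^ (-p)) (fun y hy => by simp [hh, smul_eq_mul, hy.2])]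
      rw [MeasureTheory.integral_mul_const, ← intervalIntegral.integral_of_le hr.le,
        integral_pow, Nat.sub_add_cancel hd, zero_pow (by omega), sub_zero, hcast,
        sub_add_cancel, ← Real.rpow_natCast r d, div_mul_eq_mul_div, ← Real.rpow_add hr]
      rw [sub_eq_add_neg]
    have hv2 : ∫ y in Set.Ioi r, y ^ (d - 1) • h y = r ^ ((d:ℝ) - p) / (p - d) := by
      rw [MeasureTheory.setIntegral_congr_fun measurableSet_Ioi
        (g := fun y : ℝ => y ^ ((d:ℝ) - 1 - p)) (fun y hy => ?_)]
      · rw [integral_Ioi_rpow_of_lt (by linarith) hr]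
        have h1 : (d:ℝ) - 1 - p + 1 = (d:ℝ) - p := by ring
        rw [h1, neg_div, ← div_neg]
        congr 1; ring
      · have hy0 : (0:ℝ) < y := lt_trans hr hy
        simp only [hh, smul_eq_mul, not_le.mpr (show r < y from hy), if_false]
        rw [← Real.rpow_natCast y (d-1), ← Real.rpow_add hy0, hcast]
        ring_nf
    rw [hv1, hv2]
    ring
  rw [hsplit]
  simp only [nsmul_eq_mul, smul_eq_mul, measureReal_def]
  ring

set_option maxHeartbeats 1000000 in
/-- Lemma 2.4 of the paper: there is `C = C(d,α,β,λ) > 0` such that for all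
`a ∈ [0,1]`, `t > 0` and `y ∈ ℝ^d`,
`∫₀^t ∫_{ℝ^d} f_{a,λ}(s,z,y) dz ds ≤ C (t^(1-β/α) + t)`. -/
theorem f_a_lambda_space_time_integral_bound (d : ℕ) (hd : 1 ≤ d) (α β lam : ℝ)
    (hβ : 0 < β) (hβα : β < α) (hα : α < 2) (hlam : 0 < lam) :
    ∃ C > (0:ℝ), ∀ a ∈ Set.Icc (0:ℝ) 1, ∀ t > (0:ℝ), ∀ y : EuclideanSpace ℝ (Fin d),
      (∫ s in Set.Ioc (0:ℝ) t, ∫ z : EuclideanSpace ℝ (Fin d),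
          (if dist z y ≤ s ^ (1/α) then s ^ (-((d : ℝ) + β)/α)
           else if dist z y ≤ lam then (dist z y) ^ (-((d : ℝ) + β))
           else (dist z y) ^ (-((d : ℝ) + α)) + a * (dist z y) ^ (-((d : ℝ) + β))))
        ≤ C * (t ^ (1 - β/α) + t) := by
  set E := EuclideanSpace ℝ (Fin d)
  have hα0 : 0 < α := hβ.trans hβα
  have hβα1 : β / α < 1 := (div_lt_one hα0).mpr hβα
  have hexp : (0:ℝ) < 1 - β/α := by linarith
  have hdp : (d:ℝ) < (d:ℝ) + β := by linarith
  obtain ⟨M, hM, hMspec⟩ := aux_radial d hd ((d:ℝ) + β) hdp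
  set K : ℝ := 1 + lam ^ (β - α) with hK
  have hlamp : 0 < lam ^ (β - α) := Real.rpow_pos_of_pos hlam _
  have hK1 : 1 ≤ K := by linarith
  have hK0 : 0 < K := lt_of_lt_of_le one_pos hK1
  refine ⟨K * M / (1 - β/α) + 1, by positivity, ?_⟩
  intro a ha t ht y
  have inner : ∀ s ∈ Set.Ioc (0:ℝ) t,
      (∫ z : E, (if dist z y ≤ s ^ (1/α) then s ^ (-((d : ℝ) + β)/α)
           else if dist z y ≤ lam then (dist z y) ^ (-((d : ℝ) + β))
           else (dist z y) ^ (-((d : ℝ) + α)) + a * (dist z y) ^ (-((d : ℝ) + β))))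
        ≤ K * M * s ^ (-(β/α)) := by
    intro s hs
    have hs0 : 0 < s := hs.1
    set r : ℝ := s ^ (1/α) with hr
    have hr0 : 0 < r := Real.rpow_pos_of_pos hs0 _
    obtain ⟨hint, hval⟩ := hMspec r hr0
    have hgint : Integrable (fun z : E =>
        K * (if dist z y ≤ r then r ^ (-((d:ℝ) + β)) else (dist z y) ^ (-((d:ℝ) + β)))) := by
      have := (hint.comp_sub_right y).const_mul K
      exact this.congr (Filter.Eventually.of_forall fun z => by simp only [show dist z y = ‖z - y‖ from dist_eq_norm z y])
    have hrp : r ^ (-((d:ℝ) + β)) = s ^ (-((d : ℝ) + β)/α) := by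
      rw [hr, ← Real.rpow_mul hs0.le]
      congr 1; ring
    have hfnn : ∀ z : E, 0 ≤ (if dist z y ≤ r then s ^ (-((d : ℝ) + β)/α)
           else if dist z y ≤ lam then (dist z y) ^ (-((d : ℝ) + β))
           else (dist z y) ^ (-((d : ℝ) + α)) + a * (dist z y) ^ (-((d : ℝ) + β))) := by
      intro z
      split_ifs
      · exact Real.rpow_nonneg hs0.le _
      · exact Real.rpow_nonneg dist_nonneg _
      · have := Real.rpow_nonneg (dist_nonneg (x := z) (y := y)) (-((d:ℝ) + α))
        have h2 := Real.rpow_nonneg (dist_nonneg (x := z) (y := y)) (-((d:ℝ) + β))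
        nlinarith [ha.1]
    have hfg : ∀ z : E, (if dist z y ≤ r then s ^ (-((d : ℝ) + β)/α)
           else if dist z y ≤ lam then (dist z y) ^ (-((d : ℝ) + β))
           else (dist z y) ^ (-((d : ℝ) + α)) + a * (dist z y) ^ (-((d : ℝ) + β)))
          ≤ K * (if dist z y ≤ r then r ^ (-((d:ℝ) + β)) else (dist z y) ^ (-((d:ℝ) + β))) := by
      intro z
      set D := dist z y with hD
      by_cases h1 : D ≤ r
      · rw [if_pos h1, if_pos h1, hrp]
        nlinarith [Real.rpow_nonneg hs0.le (-((d : ℝ) + β)/α)]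
      · rw [if_neg h1, if_neg h1]
        push_neg at h1
        have hD0 : 0 < D := lt_trans hr0 h1
        by_cases h2 : D ≤ lam
        · rw [if_pos h2]
          nlinarith [Real.rpow_nonneg hD0.le (-((d:ℝ) + β))]
        · rw [if_neg h2]
          push_neg at h2
          have hDβ : (0:ℝ) ≤ D ^ (-((d:ℝ) + β)) := Real.rpow_nonneg hD0.le _
          have hsplit : D ^ (-((d:ℝ) + α)) = D ^ (-((d:ℝ) + β)) * D ^ (β - α) := by
            rw [← Real.rpow_add hD0]; congr 1; ring
          have hcomp : D ^ (β - α) ≤ lam ^ (β - α) :=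
            Real.rpow_le_rpow_of_nonpos hlam h2.le (by linarith)
          have ha1 : a * D ^ (-((d:ℝ) + β)) ≤ 1 * D ^ (-((d:ℝ) + β)) :=
            mul_le_mul_of_nonneg_right ha.2 hDβ
          rw [hsplit, hK]
          nlinarith
    calc (∫ z : E, (if dist z y ≤ s ^ (1/α) then s ^ (-((d : ℝ) + β)/α)
           else if dist z y ≤ lam then (dist z y) ^ (-((d : ℝ) + β))
           else (dist z y) ^ (-((d : ℝ) + α)) + a * (dist z y) ^ (-((d : ℝ) + β))))
        ≤ ∫ z : E, K * (if dist z y ≤ r then r ^ (-((d:ℝ) + β))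
            else (dist z y) ^ (-((d:ℝ) + β))) :=
          integral_mono_of_nonneg (Filter.Eventually.of_forall hfnn) hgint
            (Filter.Eventually.of_forall hfg)
      _ = K * ∫ x : E, (if ‖x‖ ≤ r then r ^ (-((d:ℝ) + β)) else ‖x‖ ^ (-((d:ℝ) + β))) := by
          rw [MeasureTheory.integral_const_mul]
          congr 1
          have heq : (fun z : E => (if dist z y ≤ r then r ^ (-((d:ℝ) + β))
              else (dist z y) ^ (-((d:ℝ) + β))))
              = fun z : E => (fun x : E => if ‖x‖ ≤ r then r ^ (-((d:ℝ) + β))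
                else ‖x‖ ^ (-((d:ℝ) + β))) (z - y) := by
            funext z; simp [show dist z y = ‖z - y‖ from dist_eq_norm z y]
          rw [heq, MeasureTheory.integral_sub_right_eq_self
            (fun x : E => if ‖x‖ ≤ r then r ^ (-((d:ℝ) + β)) else ‖x‖ ^ (-((d:ℝ) + β))) y]
      _ ≤ K * (M * r ^ ((d:ℝ) - ((d:ℝ) + β))) := mul_le_mul_of_nonneg_left hval hK0.le
      _ = K * M * s ^ (-(β/α)) := by
          rw [hr, ← Real.rpow_mul hs0.le]
          have : 1/α * ((d:ℝ) - ((d:ℝ) + β)) = -(β/α) := by ring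
          rw [this]; ring
  have hbase : IntegrableOn (fun s : ℝ => s ^ (-(β/α))) (Set.Ioc 0 t) := by
    rw [← intervalIntegrable_iff_integrableOn_Ioc_of_le ht.le]
    exact intervalIntegral.intervalIntegrable_rpow' (by linarith)
  have hGint : IntegrableOn (fun s : ℝ => K * M * s ^ (-(β/α))) (Set.Ioc 0 t) :=
    hbase.const_mul (K * M)
  calc (∫ s in Set.Ioc (0:ℝ) t, ∫ z : E,
          (if dist z y ≤ s ^ (1/α) then s ^ (-((d : ℝ) + β)/α)
           else if dist z y ≤ lam then (dist z y) ^ (-((d : ℝ) + β))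
           else (dist z y) ^ (-((d : ℝ) + α)) + a * (dist z y) ^ (-((d : ℝ) + β))))
      ≤ ∫ s in Set.Ioc (0:ℝ) t, K * M * s ^ (-(β/α)) := by
        refine integral_mono_of_nonneg ?_ hGint ?_
        · filter_upwards [ae_restrict_mem measurableSet_Ioc] with s hs
          refine integral_nonneg fun z => ?_
          simp only [Pi.zero_apply]
          split_ifs
          · exact Real.rpow_nonneg hs.1.le _
          · exact Real.rpow_nonneg dist_nonneg _
          · have := Real.rpow_nonneg (dist_nonneg (x := z) (y := y)) (-((d:ℝ) + α))
            have h2 := Real.rpow_nonneg (dist_nonneg (x := z) (y := y)) (-((d:ℝ) + β))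
            nlinarith [ha.1]
        · filter_upwards [ae_restrict_mem measurableSet_Ioc] with s hs
          exact inner s hs
    _ = K * M * (t ^ (1 - β/α) / (1 - β/α)) := by
        rw [MeasureTheory.integral_const_mul, ← intervalIntegral.integral_of_le ht.le,
          integral_rpow (Or.inl (by linarith)),
          Real.zero_rpow (by linarith : -(β/α) + 1 ≠ 0)]
        have : -(β/α) + 1 = 1 - β/α := by ring
        rw [this, sub_zero]
    _ ≤ (K * M / (1 - β/α) + 1) * (t ^ (1 - β/α) + t) := by
        have h1 : 0 < t ^ (1 - β/α) := Real.rpow_pos_of_pos ht _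
        have h2 : K * M * (t ^ (1 - β/α) / (1 - β/α)) = K * M / (1 - β/α) * t ^ (1 - β/α) := by
          ring
        rw [h2]
        have hc : 0 ≤ K * M / (1 - β/α) := by positivity
        nlinarith
end

section
/- Let d ≥ 1, 0 < α < 2, and let g_a(t,x,y) := t^{−d/α} if |x−y| ≤ t^{1/α} and g_a(t,x,y) := t/|x−y|^{d+α} + a·t/|x−y|^{d+β} if |x−y| > t^{1/α}, where 0 < β < α and a ≥ 0. Then there exists a constant c = c(d,α,β) ≥ 1 such that for all t > 0, a ≥ 0 and x ∈ ℝ^d: c^{−1}(1 + a t^{1−β/α}) ≤ ∫_{ℝ^d} g_a(t,x,y) dy ≤ c(1 + a t^{1−β/α}). -/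
open Real MeasureTheory Set

lemma oneD_integral (d : ℕ) (hd : 1 ≤ d) (α β t a : ℝ)
    (hβ : 0 < β) (hβα : β < α) (ht : 0 < t) (ha : 0 ≤ a) :
    ∫ s in Set.Ioi (0:ℝ), (s ^ (d-1) : ℝ) •
      (if s ≤ t ^ (1/α) then t ^ (-(d : ℝ)/α)
        else t / s ^ ((d : ℝ) + α) + a * t / s ^ ((d : ℝ) + β))
      = 1/d + 1/α + a * t ^ (1 - β/α) / β := by
  have hα : 0 < α := hβ.trans hβα
  set r : ℝ := t ^ (1/α) with hr_def
  have hr : 0 < r := rpow_pos_of_pos ht _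
  set F : ℝ → ℝ := fun s => (s ^ (d-1) : ℝ) •
      (if s ≤ r then t ^ (-(d : ℝ)/α)
        else t / s ^ ((d : ℝ) + α) + a * t / s ^ ((d : ℝ) + β)) with hF
  have keyIoc : ∀ s ∈ Ioc (0:ℝ) r, F s = s ^ (d-1) * t ^ (-(d:ℝ)/α) := by
    intro s hs
    simp [hF, hs.2]
  have keyIoi : ∀ s ∈ Ioi r, F s = t * s ^ (-1-α) + a*t * s ^ (-1-β) := by
    intro s hs
    have hs0 : 0 < s := hr.trans hs
    have hns : ¬ s ≤ r := not_le.2 hs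
    have hpow : (s ^ (d-1 : ℕ) : ℝ) = s ^ ((d:ℝ) - 1) := by
      rw [← Real.rpow_natCast s (d-1), Nat.cast_sub hd, Nat.cast_one]
    have e1 : s ^ ((d:ℝ) - 1) * (t / s ^ ((d:ℝ) + α)) = t * s ^ (-1-α) := by
      rw [div_eq_mul_inv, ← Real.rpow_neg hs0.le, mul_left_comm,
        ← Real.rpow_add hs0]
      ring_nf
    have e2 : s ^ ((d:ℝ) - 1) * (a*t / s ^ ((d:ℝ) + β)) = a*t * s ^ (-1-β) := by
      rw [div_eq_mul_inv, ← Real.rpow_neg hs0.le, mul_left_comm,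
        ← Real.rpow_add hs0]
      ring_nf
    simp only [hF, hns, if_false, smul_eq_mul, hpow, mul_add, e1, e2]
  have intIoc : IntegrableOn F (Ioc 0 r) := by
    refine (IntegrableOn.congr_fun ?_ (fun s hs => (keyIoc s hs).symm) measurableSet_Ioc)
    exact ((continuous_pow _).mul continuous_const).integrableOn_Ioc
  have intαβ : ∀ γ : ℝ, 0 < γ → IntegrableOn (fun s : ℝ => s ^ (-1-γ)) (Ioi r) := by
    intro γ hγ
    exact integrableOn_Ioi_rpow_of_lt (by linarith) hr
  have intIoi : IntegrableOn F (Ioi r) := by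
    refine (IntegrableOn.congr_fun ?_ (fun s hs => (keyIoi s hs).symm) measurableSet_Ioi)
    exact ((intαβ α hα).const_mul t).add ((intαβ β hβ).const_mul (a*t))
  have hsplit : (Ioc (0:ℝ) r) ∪ (Ioi r) = Ioi 0 := Ioc_union_Ioi_eq_Ioi hr.le
  have := MeasureTheory.setIntegral_union (Ioc_disjoint_Ioi le_rfl) measurableSet_Ioi
    intIoc intIoi (f := F)
  rw [hsplit] at this
  rw [show (∫ s in Set.Ioi (0:ℝ), F s) = _ from this]
  -- Ioc part
  have hIocval : ∫ s in Ioc (0:ℝ) r, F s = 1/d := by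
    rw [setIntegral_congr_fun measurableSet_Ioc keyIoc, integral_mul_const,
      ← intervalIntegral.integral_of_le hr.le, integral_pow]
    have hd1 : (d - 1) + 1 = d := Nat.succ_pred_eq_of_pos hd
    have hrd : (r : ℝ) ^ ((d-1)+1 : ℕ) = t ^ ((d:ℝ)/α) := by
      rw [hd1, ← Real.rpow_natCast r d, hr_def, ← Real.rpow_mul ht.le]
      congr 1
      field_simp
    have hc : ((d-1:ℕ):ℝ) + 1 = d := by rw [Nat.cast_sub hd]; push_cast; ring
    rw [hrd, hd1, zero_pow (by omega : d ≠ 0), sub_zero, hc]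
    rw [div_mul_eq_mul_div, ← Real.rpow_add ht]
    have : (d:ℝ)/α + -(d:ℝ)/α = 0 := by ring
    rw [this, Real.rpow_zero]
  -- Ioi part
  have hval : ∀ γ : ℝ, 0 < γ → ∫ s in Ioi r, s ^ (-1-γ) = t ^ (-(γ/α)) / γ := by
    intro γ hγ
    rw [integral_Ioi_rpow_of_lt (by linarith) hr]
    have h1 : (-1-γ) + 1 = -γ := by ring
    rw [h1, hr_def, ← Real.rpow_mul ht.le]
    rw [show (1/α) * -γ = -(γ/α) by field_simp]
    rw [neg_div, div_neg, neg_neg]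
  have hIoival : ∫ s in Ioi r, F s = 1/α + a * t ^ (1 - β/α) / β := by
    rw [setIntegral_congr_fun measurableSet_Ioi keyIoi,
      integral_add (((intαβ α hα).const_mul t)) (((intαβ β hβ).const_mul (a*t))),
      integral_const_mul, integral_const_mul, hval α hα, hval β hβ]
    have e1 : t * (t ^ (-(α/α)) / α) = 1/α := by
      rw [show -(α/α) = (-1 : ℝ) by field_simp, Real.rpow_neg_one]
      field_simp
    have e2 : a*t * (t ^ (-(β/α)) / β) = a * t ^ (1 - β/α) / β := by
      rw [show (1 - β/α : ℝ) = 1 + -(β/α) by ring, Real.rpow_add ht, Real.rpow_one]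
      ring
    rw [e1, e2]
  rw [hIocval, hIoival]
  ring

/-- There is a constant `c = c(d,α,β) ≥ 1` such that for all `t > 0`, `a ≥ 0` and
`x ∈ ℝ^d`, `∫_{ℝ^d} g_a(t,x,y) dy` is comparable to `1 + a t^(1-β/α)` with constant `c`. -/
theorem g_a_integral_comparable (d : ℕ) (hd : 1 ≤ d) (α β : ℝ)
    (hβ : 0 < β) (hβα : β < α) (hα : α < 2) :
    ∃ c ≥ (1:ℝ), ∀ t > (0:ℝ), ∀ a ≥ (0:ℝ), ∀ x : EuclideanSpace ℝ (Fin d),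
      c⁻¹ * (1 + a * t ^ (1 - β/α)) ≤
        (∫ y : EuclideanSpace ℝ (Fin d),
          (if dist x y ≤ t ^ (1/α) then t ^ (-(d : ℝ)/α)
           else t / (dist x y) ^ ((d : ℝ) + α) + a * t / (dist x y) ^ ((d : ℝ) + β))) ∧
      (∫ y : EuclideanSpace ℝ (Fin d),
          (if dist x y ≤ t ^ (1/α) then t ^ (-(d : ℝ)/α)
           else t / (dist x y) ^ ((d : ℝ) + α) + a * t / (dist x y) ^ ((d : ℝ) + β)))
        ≤ c * (1 + a * t ^ (1 - β/α)) := by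
  have hα0 : 0 < α := hβ.trans hβα
  haveI : Nontrivial (EuclideanSpace ℝ (Fin d)) :=
    Module.nontrivial_of_finrank_pos (R := ℝ) (by rw [finrank_euclideanSpace_fin]; omega)
  set ω : ℝ := (volume (Metric.ball (0 : EuclideanSpace ℝ (Fin d)) 1)).toReal with hω_def
  have hω : 0 < ω :=
    ENNReal.toReal_pos (Metric.measure_ball_pos volume 0 one_pos).ne' measure_ball_lt_top.ne
  have hd0 : (0:ℝ) < d := by exact_mod_cast hd
  set K1 : ℝ := d * ω * (1/d + 1/α) with hK1_def
  set K2 : ℝ := d * ω / β with hK2_def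
  have hK1 : 0 < K1 :=
    mul_pos (mul_pos hd0 hω) (add_pos (one_div_pos.2 hd0) (one_div_pos.2 hα0))
  have hK2 : 0 < K2 := div_pos (mul_pos hd0 hω) hβ
  have hval : ∀ t > (0:ℝ), ∀ a ≥ (0:ℝ), ∀ x : EuclideanSpace ℝ (Fin d),
      (∫ y : EuclideanSpace ℝ (Fin d),
          (if dist x y ≤ t ^ (1/α) then t ^ (-(d : ℝ)/α)
           else t / (dist x y) ^ ((d : ℝ) + α) + a * t / (dist x y) ^ ((d : ℝ) + β)))
        = K1 + K2 * (a * t ^ (1 - β/α)) := by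
    intro t ht a ha x
    have hdist : ∀ y : EuclideanSpace ℝ (Fin d), dist x y = ‖y - x‖ := fun y => by
      rw [dist_comm, dist_eq_norm]
    simp_rw [hdist]
    rw [integral_sub_right_eq_self (μ := volume) (fun y : EuclideanSpace ℝ (Fin d) =>
      (if ‖y‖ ≤ t ^ (1/α) then t ^ (-(d : ℝ)/α)
        else t / ‖y‖ ^ ((d : ℝ) + α) + a * t / ‖y‖ ^ ((d : ℝ) + β))) x]
    rw [MeasureTheory.integral_fun_norm_addHaar volume (fun s : ℝ =>
      (if s ≤ t ^ (1/α) then t ^ (-(d : ℝ)/α)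
        else t / s ^ ((d : ℝ) + α) + a * t / s ^ ((d : ℝ) + β)))]
    rw [finrank_euclideanSpace_fin, oneD_integral d hd α β t a hβ hβα ht ha,
      nsmul_eq_mul, smul_eq_mul]
    rw [hK1_def, hK2_def]
    rw [show volume.real (Metric.ball (0 : EuclideanSpace ℝ (Fin d)) 1) = ω from hω_def.symm]
    field_simp
  refine ⟨max (max K1 K2) (max K1⁻¹ K2⁻¹), ?_, ?_⟩
  · have hcK1 : K1 ≤ max (max K1 K2) (max K1⁻¹ K2⁻¹) :=
      le_trans (le_max_left _ _) (le_max_left _ _)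
    have hcK1i : K1⁻¹ ≤ max (max K1 K2) (max K1⁻¹ K2⁻¹) :=
      le_trans (le_max_left _ _) (le_max_right _ _)
    nlinarith [mul_inv_cancel₀ hK1.ne', inv_pos.2 hK1,
      mul_le_mul hcK1 hcK1i (inv_pos.2 hK1).le (hK1.le.trans hcK1)]
  · intro t ht a ha x
    rw [hval t ht a ha x]
    set c : ℝ := max (max K1 K2) (max K1⁻¹ K2⁻¹) with hc_def
    have hcK1 : K1 ≤ c := le_trans (le_max_left _ _) (le_max_left _ _)
    have hcK2 : K2 ≤ c := le_trans (le_max_right _ _) (le_max_left _ _)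
    have hcK1i : K1⁻¹ ≤ c := le_trans (le_max_left _ _) (le_max_right _ _)
    have hcK2i : K2⁻¹ ≤ c := le_trans (le_max_right _ _) (le_max_right _ _)
    have hc0 : 0 < c := hK1.trans_le hcK1
    have hK1i : c⁻¹ ≤ K1 := inv_le_of_inv_le₀ hK1 hcK1i
    have hK2i : c⁻¹ ≤ K2 := inv_le_of_inv_le₀ hK2 hcK2i
    have hs : 0 ≤ a * t ^ (1 - β/α) := mul_nonneg ha (rpow_pos_of_pos ht _).le
    constructor
    · have := mul_le_mul_of_nonneg_right hK2i hs
      nlinarith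
    · have := mul_le_mul_of_nonneg_right hcK2 hs
      nlinarith
end

section
/- Let d ≥ 1, 0 < β < α < 2 and f₀(t,x,y) := (max(t^{1/α}, |x−y|))^{−(d+β)}. There is a constant c = c(d,α,β) > 0 such that for every t ∈ (0,1] and x, y ∈ ℝ^d, ∫₀^t ∫_{ℝ^d} f₀(t−s, x, z) f₀(s, z, y) dz ds ≤ c f₀(t, x, y). -/
open Real MeasureTheory

private lemma max_one_rpow_integrable (d : ℕ) {p : ℝ} (hp : (d:ℝ) < p) :
    Integrable (fun w : EuclideanSpace ℝ (Fin d) => (max 1 ‖w‖) ^ (-p)) := by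
  have hi : Integrable (fun w : EuclideanSpace ℝ (Fin d) => (2:ℝ)^p * (1 + ‖w‖) ^ (-p)) := by
    refine (integrable_one_add_norm ?_).const_mul _
    simpa [finrank_euclideanSpace_fin] using hp
  refine hi.mono' ?_ ?_
  · refine (Continuous.rpow_const ?_ ?_).aestronglyMeasurable
    · exact continuous_const.max continuous_norm
    · intro w; left; positivity
  · filter_upwards with w
    have h1 : (0:ℝ) < max 1 ‖w‖ := lt_max_of_lt_left one_pos
    rw [Real.norm_eq_abs, abs_of_nonneg (rpow_nonneg h1.le _)]
    have h2 : (1 + ‖w‖)/2 ≤ max 1 ‖w‖ := by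
      have hw : ‖w‖ ≤ max 1 ‖w‖ := le_max_right _ _
      have h1' : (1:ℝ) ≤ max 1 ‖w‖ := le_max_left _ _
      linarith
    calc (max 1 ‖w‖)^(-p) ≤ ((1 + ‖w‖)/2)^(-p) := by
          apply rpow_le_rpow_of_nonpos (by positivity) h2
          linarith [(Nat.cast_nonneg d : (0:ℝ) ≤ d)]
      _ = (2:ℝ)^p * (1+‖w‖)^(-p) := by
          rw [div_rpow (by positivity) (by norm_num), Real.rpow_neg (by norm_num : (0:ℝ) ≤ 2)]
          field_simp

private lemma scaled_norm_eq (d : ℕ) {p a : ℝ} (ha : 0 < a) (z : EuclideanSpace ℝ (Fin d)) :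
    (max a ‖z‖) ^ (-p) = a ^ (-p) * (max 1 ‖a⁻¹ • z‖) ^ (-p) := by
  have h : ‖a⁻¹ • z‖ = a⁻¹ * ‖z‖ := by
    rw [norm_smul, Real.norm_eq_abs, abs_of_nonneg (by positivity)]
  have h2 : max a ‖z‖ = a * max 1 (a⁻¹ * ‖z‖) := by
    rw [mul_max_of_nonneg _ _ ha.le, mul_one, ← mul_assoc, mul_inv_cancel₀ ha.ne', one_mul]
  rw [h, h2, Real.mul_rpow ha.le (le_max_of_le_left zero_le_one)]

private lemma scaled_integrable (d : ℕ) {p a : ℝ} (hp : (d:ℝ) < p) (ha : 0 < a)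
    (y : EuclideanSpace ℝ (Fin d)) :
    Integrable (fun z : EuclideanSpace ℝ (Fin d) => (max a (dist z y)) ^ (-p)) := by
  have h0 : Integrable (fun w : EuclideanSpace ℝ (Fin d) => (max 1 ‖w‖) ^ (-p)) :=
    max_one_rpow_integrable d hp
  have h1 : Integrable (fun z : EuclideanSpace ℝ (Fin d) => (max 1 ‖a⁻¹ • z‖) ^ (-p)) :=
    h0.comp_smul (inv_ne_zero ha.ne')
  have h2 : Integrable (fun z : EuclideanSpace ℝ (Fin d) => (max a ‖z‖) ^ (-p)) := by
    simpa [scaled_norm_eq d ha] using h1.const_mul (a ^ (-p))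
  have h3 := h2.comp_sub_right y
  simpa [dist_eq_norm] using h3

private lemma scaled_integral (d : ℕ) {p a : ℝ} (ha : 0 < a) (y : EuclideanSpace ℝ (Fin d)) :
    ∫ z : EuclideanSpace ℝ (Fin d), (max a (dist z y)) ^ (-p)
      = a ^ ((d:ℝ) - p) * ∫ w : EuclideanSpace ℝ (Fin d), (max 1 ‖w‖) ^ (-p) := by
  have step1 : ∫ z : EuclideanSpace ℝ (Fin d), (max a (dist z y)) ^ (-p)
      = ∫ z : EuclideanSpace ℝ (Fin d), (max a ‖z‖) ^ (-p) := by
    simp_rw [dist_eq_norm]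
    exact integral_sub_right_eq_self (fun z => (max a ‖z‖) ^ (-p)) y
  rw [step1]
  have step2 : ∫ z : EuclideanSpace ℝ (Fin d), (max a ‖z‖) ^ (-p)
      = a ^ (-p) * ∫ z : EuclideanSpace ℝ (Fin d), (max 1 ‖a⁻¹ • z‖) ^ (-p) := by
    simp_rw [scaled_norm_eq d ha]
    rw [integral_const_mul]
  rw [step2, MeasureTheory.Measure.integral_comp_inv_smul_of_nonneg volume
    (fun w : EuclideanSpace ℝ (Fin d) => (max 1 ‖w‖) ^ (-p)) ha.le]
  rw [finrank_euclideanSpace_fin, smul_eq_mul, ← mul_assoc]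
  congr 1
  rw [← Real.rpow_natCast a d, ← Real.rpow_add ha]
  congr 1
  ring

/-- The convolution inequality (3.13): there is `c = c(d,α,β) > 0` such that for
every `t ∈ (0,1]` and `x, y ∈ ℝ^d`,
`∫₀^t ∫ f₀(t-s,x,z) f₀(s,z,y) dz ds ≤ c f₀(t,x,y)`. -/
theorem f0_convolution_bound (d : ℕ) (hd : 1 ≤ d) (α β : ℝ)
    (hβ : 0 < β) (hβα : β < α) (hα : α < 2) :
    ∃ c > (0:ℝ), ∀ t ∈ Set.Ioc (0:ℝ) 1, ∀ x y : EuclideanSpace ℝ (Fin d),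
      (∫ s in Set.Ioc (0:ℝ) t, ∫ z : EuclideanSpace ℝ (Fin d),
          (max ((t - s) ^ (1/α)) (dist x z)) ^ (-((d : ℝ) + β)) *
          (max (s ^ (1/α)) (dist z y)) ^ (-((d : ℝ) + β)))
        ≤ c * (max (t ^ (1/α)) (dist x y)) ^ (-((d : ℝ) + β)) := by
  have hα0 : (0:ℝ) < α := hβ.trans hβα
  set p : ℝ := (d:ℝ) + β with hp_def
  have hdp : (d:ℝ) < p := by rw [hp_def]; linarith
  have hp0 : 0 < p := lt_of_le_of_lt (Nat.cast_nonneg d) hdp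
  set I : ℝ := ∫ w : EuclideanSpace ℝ (Fin d), (max 1 ‖w‖) ^ (-p) with hI_def
  have hI0 : 0 ≤ I := integral_nonneg fun w => rpow_nonneg (le_max_of_le_left zero_le_one) _
  set K : ℝ := (2:ℝ) ^ ((1 + 1/α) * p) with hK_def
  have hK0 : 0 < K := rpow_pos_of_pos two_pos _
  set e : ℝ := (1/α) * (-β) with he_def
  have he : -1 < e := by
    have h1 : β / α < 1 := (div_lt_one hα0).2 hβα
    have h2 : e = -(β/α) := by rw [he_def]; ring
    rw [h2]; linarith
  have he1 : 0 < e + 1 := by linarith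
  refine ⟨K * I * (2 / (e + 1)) + 1, by positivity, fun t ht x y => ?_⟩
  obtain ⟨ht0, ht1⟩ := ht
  set M : ℝ := max (t ^ (1/α)) (dist x y) with hM_def
  have hM0 : 0 < M := lt_max_of_lt_left (rpow_pos_of_pos ht0 _)
  have hMp : 0 ≤ M ^ (-p) := rpow_nonneg hM0.le _
  set c2 : ℝ := (2:ℝ) ^ (1 + 1/α) with hc2_def
  have hc2 : 0 < c2 := rpow_pos_of_pos two_pos _
  have hc2K : c2 ^ p = K := by
    rw [hc2_def, hK_def]; exact (Real.rpow_mul two_pos.le _ _).symm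
  -- pointwise product bound
  have prod_le : ∀ m1 m2 : ℝ, 0 < m1 → 0 < m2 → M ≤ c2 * max m1 m2 →
      m1 ^ (-p) * m2 ^ (-p) ≤ K * M ^ (-p) * (m1 ^ (-p) + m2 ^ (-p)) := by
    have key : ∀ u v : ℝ, 0 < u → 0 < v → M ≤ c2 * v →
        u ^ (-p) * v ^ (-p) ≤ K * M ^ (-p) * u ^ (-p) := by
      intro u v hu hv hMv
      have hv' : v ^ (-p) ≤ K * M ^ (-p) := by
        have h3 : M / c2 ≤ v := by rw [div_le_iff₀ hc2]; linarith
        calc v ^ (-p) ≤ (M / c2) ^ (-p) :=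
              rpow_le_rpow_of_nonpos (by positivity) h3 (by linarith)
          _ = K * M ^ (-p) := by
              rw [div_rpow hM0.le hc2.le, Real.rpow_neg hc2.le]
              rw [← hc2K]
              field_simp
      calc u ^ (-p) * v ^ (-p) ≤ u ^ (-p) * (K * M ^ (-p)) :=
            mul_le_mul_of_nonneg_left hv' (rpow_nonneg hu.le _)
        _ = K * M ^ (-p) * u ^ (-p) := by ring
    intro m1 m2 h1 h2 hle
    rcases le_total m1 m2 with h | h
    · have hm := key m1 m2 h1 h2 (by rwa [max_eq_right h] at hle)
      have hnn : 0 ≤ K * M ^ (-p) * m2 ^ (-p) := by positivity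
      calc m1 ^ (-p) * m2 ^ (-p) ≤ K * M ^ (-p) * m1 ^ (-p) := hm
        _ ≤ K * M ^ (-p) * (m1 ^ (-p) + m2 ^ (-p)) := by rw [mul_add]; linarith
    · have hm := key m2 m1 h2 h1 (by rwa [max_eq_left h] at hle)
      have hnn : 0 ≤ K * M ^ (-p) * m1 ^ (-p) := by positivity
      calc m1 ^ (-p) * m2 ^ (-p) = m2 ^ (-p) * m1 ^ (-p) := mul_comm _ _
        _ ≤ K * M ^ (-p) * m2 ^ (-p) := hm
        _ ≤ K * M ^ (-p) * (m1 ^ (-p) + m2 ^ (-p)) := by rw [mul_add]; linarith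
  -- geometric max bound
  have hMle : ∀ s ∈ Set.Ioo (0:ℝ) t, ∀ z : EuclideanSpace ℝ (Fin d),
      M ≤ c2 * max (max ((t-s)^(1/α)) (dist x z)) (max (s^(1/α)) (dist z y)) := by
    intro s hs z
    set A : ℝ := (t-s)^(1/α) with hA_def
    set B : ℝ := s^(1/α) with hB_def
    set m1 : ℝ := max A (dist x z) with hm1_def
    set m2 : ℝ := max B (dist z y) with hm2_def
    have hts : 0 < t - s := sub_pos.2 hs.2
    have hA : 0 < A := rpow_pos_of_pos hts _
    have hB : 0 < B := rpow_pos_of_pos hs.1 _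
    have h2pos : (0:ℝ) < (2:ℝ)^(1/α) := rpow_pos_of_pos two_pos _
    have hA' : A ≤ m1 := le_max_left _ _
    have hB' : B ≤ m2 := le_max_left _ _
    have ht' : t ^ (1/α) ≤ (2:ℝ)^(1/α) * (A + B) := by
      have h1 : t ≤ 2 * max (t-s) s := by
        rcases le_total (t-s) s with h | h
        · rw [max_eq_right h]; linarith
        · rw [max_eq_left h]; linarith
      have h2 : t^(1/α) ≤ (2 * max (t-s) s)^(1/α) :=
        rpow_le_rpow ht0.le h1 (by positivity)
      have h3 : (2 * max (t-s) s)^(1/α) = 2^(1/α) * (max (t-s) s)^(1/α) :=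
        Real.mul_rpow (by norm_num) (le_max_of_le_left hts.le)
      have h4 : (max (t-s) s)^(1/α) ≤ A + B := by
        rcases le_total (t-s) s with h | h
        · rw [max_eq_right h, ← hB_def]; linarith
        · rw [max_eq_left h, ← hA_def]; linarith
      calc t^(1/α) ≤ 2^(1/α) * (max (t-s) s)^(1/α) := h3 ▸ h2
        _ ≤ 2^(1/α) * (A + B) := mul_le_mul_of_nonneg_left h4 h2pos.le
    have hsum : M ≤ (2:ℝ)^(1/α) * (m1 + m2) := by
      have h2a : (1:ℝ) ≤ (2:ℝ)^(1/α) := Real.one_le_rpow one_le_two (by positivity)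
      rw [hM_def]
      apply max_le
      · calc t^(1/α) ≤ 2^(1/α) * (A + B) := ht'
          _ ≤ 2^(1/α) * (m1 + m2) :=
              mul_le_mul_of_nonneg_left (by linarith) h2pos.le
      · have htri : dist x y ≤ dist x z + dist z y := dist_triangle _ _ _
        have hm1 : dist x z ≤ m1 := le_max_right _ _
        have hm2 : dist z y ≤ m2 := le_max_right _ _
        have h12 : 0 ≤ m1 + m2 := by positivity
        nlinarith
    have hmax : m1 + m2 ≤ 2 * max m1 m2 := by
      rcases le_total m1 m2 with h | h
      · rw [max_eq_right h]; linarith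
      · rw [max_eq_left h]; linarith
    have hc2eq : c2 = 2 * (2:ℝ)^(1/α) := by
      rw [hc2_def, Real.rpow_add two_pos, Real.rpow_one]
    calc M ≤ (2:ℝ)^(1/α) * (m1 + m2) := hsum
      _ ≤ (2:ℝ)^(1/α) * (2 * max m1 m2) := mul_le_mul_of_nonneg_left hmax h2pos.le
      _ = c2 * max m1 m2 := by rw [hc2eq]; ring
  -- inner integral bound
  have inner_le : ∀ s ∈ Set.Ioo (0:ℝ) t,
      (∫ z : EuclideanSpace ℝ (Fin d),
          (max ((t - s) ^ (1/α)) (dist x z)) ^ (-p) * (max (s ^ (1/α)) (dist z y)) ^ (-p))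
        ≤ K * M^(-p) * I * ((t-s)^e + s^e) := by
    intro s hs
    have hts : 0 < t - s := sub_pos.2 hs.2
    have hA : 0 < (t-s)^(1/α) := rpow_pos_of_pos hts _
    have hB : 0 < s^(1/α) := rpow_pos_of_pos hs.1 _
    have hint1 : Integrable (fun z : EuclideanSpace ℝ (Fin d) =>
        (max ((t-s)^(1/α)) (dist x z)) ^ (-p)) :=
      (scaled_integrable d hdp hA x).congr
        (Filter.Eventually.of_forall fun z => by dsimp only; rw [dist_comm])
    have hint2 : Integrable (fun z : EuclideanSpace ℝ (Fin d) =>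
        (max (s^(1/α)) (dist z y)) ^ (-p)) := scaled_integrable d hdp hB y
    have hbound : (∫ z : EuclideanSpace ℝ (Fin d),
          (max ((t - s) ^ (1/α)) (dist x z)) ^ (-p) * (max (s ^ (1/α)) (dist z y)) ^ (-p))
        ≤ ∫ z : EuclideanSpace ℝ (Fin d), K * M^(-p) *
            ((max ((t-s)^(1/α)) (dist x z)) ^ (-p) + (max (s^(1/α)) (dist z y)) ^ (-p)) := by
      apply integral_mono_of_nonneg
      · filter_upwards with z
        exact mul_nonneg (rpow_nonneg (le_max_of_le_left hA.le) _)
          (rpow_nonneg (le_max_of_le_left hB.le) _)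
      · exact (hint1.add hint2).const_mul _
      · filter_upwards with z
        exact prod_le _ _ (lt_max_of_lt_left hA) (lt_max_of_lt_left hB) (hMle s hs z)
    have hdmp : (d:ℝ) - p = -β := by rw [hp_def]; ring
    have hexp1 : ((t-s)^(1/α)) ^ ((d:ℝ) - p) = (t-s)^e := by
      rw [hdmp, he_def, Real.rpow_mul hts.le]
    have hexp2 : (s^(1/α)) ^ ((d:ℝ) - p) = s^e := by
      rw [hdmp, he_def, Real.rpow_mul hs.1.le]
    have hval : (∫ z : EuclideanSpace ℝ (Fin d), K * M^(-p) *
            ((max ((t-s)^(1/α)) (dist x z)) ^ (-p) + (max (s^(1/α)) (dist z y)) ^ (-p)))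
        = K * M^(-p) * I * ((t-s)^e + s^e) := by
      rw [integral_const_mul, integral_add hint1 hint2]
      have e1 : (∫ z : EuclideanSpace ℝ (Fin d), (max ((t-s)^(1/α)) (dist x z)) ^ (-p))
          = (t-s)^e * I := by
        rw [integral_congr_ae (Filter.Eventually.of_forall fun z => by dsimp only; rw [dist_comm] :
          (fun z : EuclideanSpace ℝ (Fin d) => (max ((t-s)^(1/α)) (dist x z)) ^ (-p)) =ᵐ[volume]
          (fun z : EuclideanSpace ℝ (Fin d) => (max ((t-s)^(1/α)) (dist z x)) ^ (-p)))]
        rw [scaled_integral d hA x, hexp1, hI_def]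
      have e2 : (∫ z : EuclideanSpace ℝ (Fin d), (max (s^(1/α)) (dist z y)) ^ (-p))
          = s^e * I := by
        rw [scaled_integral d hB y, hexp2, hI_def]
      rw [e1, e2]; ring
    calc _ ≤ _ := hbound
      _ = _ := hval
  -- outer bound
  have houter : (∫ s in Set.Ioc (0:ℝ) t, ∫ z : EuclideanSpace ℝ (Fin d),
          (max ((t - s) ^ (1/α)) (dist x z)) ^ (-p) * (max (s ^ (1/α)) (dist z y)) ^ (-p))
      ≤ ∫ s in Set.Ioc (0:ℝ) t, K * M^(-p) * I * ((t-s)^e + s^e) := by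
    apply integral_mono_of_nonneg
    · filter_upwards with s
      exact integral_nonneg fun z => mul_nonneg
        (rpow_nonneg (le_max_of_le_right dist_nonneg) _)
        (rpow_nonneg (le_max_of_le_right dist_nonneg) _)
    · have hIG : IntervalIntegrable (fun s => K * M^(-p) * I * ((t-s)^e + s^e)) volume 0 t := by
        have hg1 : IntervalIntegrable (fun s : ℝ => (t-s)^e) volume 0 t := by
          have := (intervalIntegral.intervalIntegrable_rpow' (a := t) (b := 0) he).comp_sub_left t
          simpa using this
        have hg2 : IntervalIntegrable (fun s : ℝ => s^e) volume 0 t :=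
          intervalIntegral.intervalIntegrable_rpow' he
        exact (hg1.add hg2).const_mul _
      exact (intervalIntegrable_iff_integrableOn_Ioc_of_le ht0.le).1 hIG
    · have h1 : ∀ᵐ s ∂(volume.restrict (Set.Ioc (0:ℝ) t)), s ∈ Set.Ioc (0:ℝ) t :=
        ae_restrict_mem measurableSet_Ioc
      have h2 : ∀ᵐ s ∂(volume.restrict (Set.Ioc (0:ℝ) t)), s ≠ t := by
        refine ae_restrict_of_ae ?_
        rw [ae_iff]
        have : {s : ℝ | ¬ s ≠ t} = {t} := by ext s; simp [not_not]
        rw [this]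
        exact Real.volume_singleton
      filter_upwards [h1, h2] with s hs hst
      exact inner_le s ⟨hs.1, lt_of_le_of_ne hs.2 hst⟩
  -- compute outer integral
  have hval2 : (∫ s in Set.Ioc (0:ℝ) t, K * M^(-p) * I * ((t-s)^e + s^e))
      = K * M^(-p) * I * (2 * (t^(e+1)/(e+1))) := by
    rw [← intervalIntegral.integral_of_le ht0.le]
    rw [intervalIntegral.integral_const_mul]
    congr 1
    have hg1 : IntervalIntegrable (fun s : ℝ => (t-s)^e) volume 0 t := by
      have := (intervalIntegral.intervalIntegrable_rpow' (a := t) (b := 0) he).comp_sub_left t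
      simpa using this
    have hg2 : IntervalIntegrable (fun s : ℝ => s^e) volume 0 t :=
      intervalIntegral.intervalIntegrable_rpow' he
    rw [intervalIntegral.integral_add hg1 hg2]
    have hrefl : (∫ s in (0:ℝ)..t, (t-s)^e) = ∫ s in (0:ℝ)..t, s^e := by
      rw [intervalIntegral.integral_comp_sub_left (fun u : ℝ => u^e) t]
      norm_num
    rw [hrefl, integral_rpow (Or.inl he), Real.zero_rpow he1.ne']
    ring
  have htle : t^(e+1) ≤ 1 := Real.rpow_le_one ht0.le ht1 he1.le
  calc (∫ s in Set.Ioc (0:ℝ) t, ∫ z : EuclideanSpace ℝ (Fin d),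
          (max ((t - s) ^ (1/α)) (dist x z)) ^ (-p) * (max (s ^ (1/α)) (dist z y)) ^ (-p))
      ≤ ∫ s in Set.Ioc (0:ℝ) t, K * M^(-p) * I * ((t-s)^e + s^e) := houter
    _ = K * M^(-p) * I * (2 * (t^(e+1)/(e+1))) := hval2
    _ = (K * I * (2/(e+1))) * M^(-p) * t^(e+1) := by ring
    _ ≤ (K * I * (2/(e+1))) * M^(-p) * 1 :=
        mul_le_mul_of_nonneg_left htle (by positivity)
    _ = (K * I * (2/(e+1))) * M^(-p) := by ring
    _ ≤ (K * I * (2/(e+1)) + 1) * M^(-p) :=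
        mul_le_mul_of_nonneg_right (by linarith) hMp
end

section
/- Let 0 < β < α < 2, d ≥ 1, and let p₀(t,x,y) be the symmetric α-stable heat kernel. Suppose b : ℝ^d × ℝ^d → ℝ is bounded measurable with b(x,z) = b(x,−z), and define S^b_z p₀(s,z,y) as the principal value integral A(d,−β) p.v. ∫ (p₀(s,z+w,y) − p₀(s,z,y)) b(z,w)/|w|^{d+β} dw. Assume the bound |S^b_z p₀(s,z,y)| ≤ C₇ ‖b‖_∞ f₀(s,z,y) where f₀(s,z,y) := (max(s^{1/α},|z−y|))^{−(d+β)}. Define q₀^b := p₀ and inductively qₙ^b(t,x,y) := ∫₀^t ∫_{ℝ^d} q_{n−1}^b(t−s,x,z) S^b_z p₀(s,z,y) dz ds. Then there are constants C, K > 0 depending only on d, α, β, ‖b‖_∞ such that |qₙ^b(t,x,y)| ≤ C K^n g(t,x,y) for all n ≥ 0, t ∈ (0,1] and x,y ∈ ℝ^d, where g(t,x,y) := t^{−d/α} if |x−y| ≤ t^{1/α} and g(t,x,y) := t/|x−y|^{d+α} + t/|x−y|^{d+β} otherwise. -/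
open Real MeasureTheory

/-- `f₀(s,z,y) = (max(s^{1/α}, |z-y|))^{-(d+β)}`. -/
noncomputable def paperF₀ (d : ℕ) (α β : ℝ) (s : ℝ)
    (z y : EuclideanSpace ℝ (Fin d)) : ℝ :=
  (max (s ^ (1/α)) (dist z y)) ^ (-((d : ℝ) + β))

/-- `g(t,x,y) = t^{-d/α}` if `|x-y| ≤ t^{1/α}`, else
`t/|x-y|^{d+α} + t/|x-y|^{d+β}`. -/
noncomputable def paperG (d : ℕ) (α β : ℝ) (t : ℝ)
    (x y : EuclideanSpace ℝ (Fin d)) : ℝ :=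
  if dist x y ≤ t ^ (1/α) then t ^ (-(d : ℝ)/α)
  else t / (dist x y) ^ ((d : ℝ) + α) + t / (dist x y) ^ ((d : ℝ) + β)

section Aux

variable {d : ℕ} {α β p : ℝ}

local notation "E" => EuclideanSpace ℝ (Fin d)

lemma paperF₀_nonneg (s : ℝ) (z y : E) : 0 ≤ paperF₀ d α β s z y :=
  Real.rpow_nonneg (le_trans dist_nonneg (le_max_right _ _)) _

lemma paperG_nonneg {t : ℝ} (ht : 0 ≤ t) (x y : E) : 0 ≤ paperG d α β t x y := by
  unfold paperG; split
  · exact Real.rpow_nonneg ht _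
  · exact add_nonneg (div_nonneg ht (Real.rpow_nonneg dist_nonneg _))
      (div_nonneg ht (Real.rpow_nonneg dist_nonneg _))

lemma integrable_max_one_rpow (hp : (d:ℝ) < p) :
    Integrable (fun w : E => (max 1 ‖w‖) ^ (-p)) := by
  have hp0 : 0 < p := lt_of_le_of_lt (Nat.cast_nonneg d) hp
  have hfr : (Module.finrank ℝ E : ℝ) < p := by
    rwa [finrank_euclideanSpace_fin]
  refine ((integrable_one_add_norm hfr).const_mul ((2:ℝ)^p)).mono' ?_ ?_
  · exact Measurable.aestronglyMeasurable (by fun_prop)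
  · filter_upwards with w
    have h1 : (0:ℝ) < (1 + ‖w‖)/2 := by positivity
    have h2 : (1 + ‖w‖)/2 ≤ max 1 ‖w‖ := by
      rcases le_total ‖w‖ 1 with h | h
      · have : (1+‖w‖)/2 ≤ 1 := by linarith
        exact this.trans (le_max_left _ _)
      · have : (1+‖w‖)/2 ≤ ‖w‖ := by linarith
        exact this.trans (le_max_right _ _)
    have h3 := Real.rpow_le_rpow_of_nonpos h1 h2 (neg_nonpos.2 hp0.le)
    rw [Real.norm_eq_abs, abs_of_nonneg (Real.rpow_nonneg (le_trans (by positivity) h2) _)]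
    refine h3.trans (le_of_eq ?_)
    rw [Real.div_rpow (by positivity) (by norm_num),
      Real.rpow_neg (by norm_num : (0:ℝ) ≤ 2)]
    simp [div_eq_mul_inv, inv_inv, mul_comm]

lemma integral_max_rpow (hp : (d:ℝ) < p) {c : ℝ} (hc : 0 < c) (y : E) :
    Integrable (fun z : E => (max c (dist z y)) ^ (-p)) ∧
    ∫ z : E, (max c (dist z y)) ^ (-p) =
      c ^ ((d:ℝ) - p) * ∫ w : E, (max 1 ‖w‖) ^ (-p) := by
  have hkey : ∀ z : E, (max c (dist z y)) ^ (-p)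
      = c ^ (-p) * (max 1 ‖c⁻¹ • (z - y)‖) ^ (-p) := by
    intro z
    have hn : ‖c⁻¹ • (z - y)‖ = c⁻¹ * ‖z - y‖ := by
      rw [norm_smul, Real.norm_eq_abs, abs_of_pos (inv_pos.2 hc)]
    have hmax : max c (dist z y) = c * max 1 (c⁻¹ * ‖z - y‖) := by
      rw [dist_eq_norm, mul_max_of_nonneg _ _ hc.le, mul_one, ← mul_assoc,
        mul_inv_cancel₀ hc.ne', one_mul]
    rw [hn, hmax, Real.mul_rpow hc.le (le_trans zero_le_one (le_max_left _ _))]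
  have hJ : Integrable (fun w : E => (max 1 ‖w‖) ^ (-p)) := integrable_max_one_rpow hp
  have h1 : Integrable (fun u : E => (max 1 ‖c⁻¹ • u‖) ^ (-p)) :=
    hJ.comp_smul (inv_ne_zero hc.ne')
  have h2 : Integrable (fun z : E => (max 1 ‖c⁻¹ • (z - y)‖) ^ (-p)) :=
    h1.comp_sub_right y
  constructor
  · exact (h2.const_mul (c ^ (-p))).congr (ae_of_all _ fun z => (hkey z).symm)
  · calc ∫ z : E, (max c (dist z y)) ^ (-p)
        = ∫ z : E, c ^ (-p) * (max 1 ‖c⁻¹ • (z - y)‖) ^ (-p) := by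
          exact integral_congr_ae (ae_of_all _ hkey)
      _ = c ^ (-p) * ∫ z : E, (max 1 ‖c⁻¹ • (z - y)‖) ^ (-p) := integral_const_mul _ _
      _ = c ^ (-p) * ∫ u : E, (max 1 ‖c⁻¹ • u‖) ^ (-p) := by
          rw [integral_sub_right_eq_self (fun u : E => (max 1 ‖c⁻¹ • u‖) ^ (-p)) y]
      _ = c ^ (-p) * (c ^ (Module.finrank ℝ E) • ∫ w : E, (max 1 ‖w‖) ^ (-p)) := by
          rw [Measure.integral_comp_inv_smul_of_nonneg volume
            (fun w : E => (max 1 ‖w‖) ^ (-p)) hc.le]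
      _ = c ^ ((d:ℝ) - p) * ∫ w : E, (max 1 ‖w‖) ^ (-p) := by
          rw [smul_eq_mul, ← mul_assoc, finrank_euclideanSpace_fin,
            ← Real.rpow_natCast c d, ← Real.rpow_add hc]
          ring_nf

lemma paperF₀_int (hβ : 0 < β) (hα : 0 < α) {s : ℝ} (hs : 0 < s) (y : E) :
    Integrable (fun z : E => paperF₀ d α β s z y) ∧
    ∫ z : E, paperF₀ d α β s z y
      = s ^ (-(β/α)) * ∫ w : E, (max 1 ‖w‖) ^ (-((d:ℝ) + β)) := by
  have hp : (d:ℝ) < (d:ℝ) + β := by linarith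
  have hc : (0:ℝ) < s ^ (1/α) := Real.rpow_pos_of_pos hs _
  obtain ⟨h1, h2⟩ := integral_max_rpow hp hc y
  unfold paperF₀
  refine ⟨h1, ?_⟩
  rw [h2]
  congr 1
  rw [← Real.rpow_mul hs.le]
  congr 1
  field_simp
  ring

lemma rpow_combine (hα : α ≠ 0) {τ : ℝ} (hτ : 0 < τ) :
    τ ^ (β/α) * (τ ^ (1/α)) ^ (-((d:ℝ) + β)) = τ ^ (-(d:ℝ)/α) := by
  rw [← Real.rpow_mul hτ.le, ← Real.rpow_add hτ]
  congr 1
  field_simp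
  ring

lemma paperG_le (hβ : 0 < β) (hβα : β < α) {τ : ℝ} (hτ : 0 < τ) (hτ1 : τ ≤ 1) (x z : E) :
    paperG d α β τ x z ≤ 2 * τ ^ (β/α) * paperF₀ d α β τ z x := by
  have hα : 0 < α := hβ.trans hβα
  unfold paperG paperF₀
  rw [dist_comm z x]
  by_cases h : dist x z ≤ τ ^ (1/α)
  · rw [if_pos h, max_eq_left h]
    have e : (2:ℝ) * τ ^ (β/α) * (τ ^ (1/α)) ^ (-((d:ℝ) + β)) = 2 * τ ^ (-(d:ℝ)/α) := by
      rw [mul_assoc, rpow_combine hα.ne' hτ]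
    rw [e]
    nlinarith [Real.rpow_nonneg hτ.le (-(d:ℝ)/α)]
  · rw [if_neg h]
    push_neg at h
    rw [max_eq_right h.le]
    set r := dist x z with hrdef
    have hr0 : 0 < r := lt_trans (Real.rpow_pos_of_pos hτ _) h
    have hτα : (0:ℝ) < τ ^ (1/α) := Real.rpow_pos_of_pos hτ _
    have e2 : τ / r ^ ((d:ℝ) + β) ≤ τ ^ (β/α) * r ^ (-((d:ℝ) + β)) := by
      rw [div_eq_mul_inv, ← Real.rpow_neg hr0.le]
      refine mul_le_mul_of_nonneg_right ?_ (Real.rpow_nonneg hr0.le _)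
      have h1 : β/α ≤ 1 := le_of_lt ((div_lt_one hα).2 hβα)
      have := Real.rpow_le_rpow_of_exponent_ge hτ hτ1 h1
      rwa [Real.rpow_one] at this
    have e1 : τ / r ^ ((d:ℝ) + α) ≤ τ ^ (β/α) * r ^ (-((d:ℝ) + β)) := by
      rw [div_eq_mul_inv, ← Real.rpow_neg hr0.le]
      have split : r ^ (-((d:ℝ) + α)) = r ^ (-((d:ℝ) + β)) * r ^ (β - α) := by
        rw [← Real.rpow_add hr0]
        congr 1
        ring
      have hb : r ^ (β - α) ≤ (τ ^ (1/α)) ^ (β - α) :=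
        Real.rpow_le_rpow_of_nonpos hτα h.le (by linarith)
      have hb2 : (τ ^ (1/α)) ^ (β - α) = τ ^ (β/α - 1) := by
        rw [← Real.rpow_mul hτ.le]
        congr 1
        field_simp
      have step : τ * r ^ (-((d:ℝ) + α))
          ≤ τ * (r ^ (-((d:ℝ) + β)) * τ ^ (β/α - 1)) := by
        rw [split]
        refine mul_le_mul_of_nonneg_left ?_ hτ.le
        refine mul_le_mul_of_nonneg_left ?_ (Real.rpow_nonneg hr0.le _)
        rw [← hb2]; exact hb
      refine step.trans (le_of_eq ?_)
      have : τ * τ ^ (β/α - 1) = τ ^ (β/α) := by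
        nth_rewrite 1 [← Real.rpow_one τ]
        rw [← Real.rpow_add hτ]
        congr 1
        ring
      calc τ * (r ^ (-((d:ℝ) + β)) * τ ^ (β/α - 1))
          = (τ * τ ^ (β/α - 1)) * r ^ (-((d:ℝ) + β)) := by ring
        _ = τ ^ (β/α) * r ^ (-((d:ℝ) + β)) := by rw [this]
    calc τ / r ^ ((d:ℝ) + α) + τ / r ^ ((d:ℝ) + β)
        ≤ τ ^ (β/α) * r ^ (-((d:ℝ) + β)) + τ ^ (β/α) * r ^ (-((d:ℝ) + β)) := add_le_add e1 e2
      _ = 2 * τ ^ (β/α) * r ^ (-((d:ℝ) + β)) := by ring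

lemma paperG_le' (hβ : 0 < β) (hβα : β < α) {τ : ℝ} (hτ : 0 < τ) (hτ1 : τ ≤ 1) (x z : E) :
    paperG d α β τ x z ≤ 2 * τ ^ (-(d:ℝ)/α) := by
  have hα : 0 < α := hβ.trans hβα
  refine (paperG_le hβ hβα hτ hτ1 x z).trans ?_
  have hf : paperF₀ d α β τ z x ≤ (τ ^ (1/α)) ^ (-((d:ℝ) + β)) := by
    unfold paperF₀
    exact Real.rpow_le_rpow_of_nonpos (Real.rpow_pos_of_pos hτ _) (le_max_left _ _)
      (neg_nonpos.2 (by positivity))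
  calc 2 * τ ^ (β/α) * paperF₀ d α β τ z x
      ≤ 2 * τ ^ (β/α) * (τ ^ (1/α)) ^ (-((d:ℝ) + β)) := by
        refine mul_le_mul_of_nonneg_left hf (by positivity)
    _ = 2 * τ ^ (-(d:ℝ)/α) := by rw [mul_assoc, rpow_combine hα.ne' hτ]

lemma G_props (hβ : 0 < β) (hβα : β < α) {t : ℝ} (ht : 0 < t) (ht1 : t ≤ 1)
    (x y : E) :
    (∀ s ∈ Set.Ioo (0:ℝ) t, Integrable
      (fun z : E => paperG d α β (t - s) x z * paperF₀ d α β s z y)) ∧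
    IntegrableOn
      (fun s => ∫ z : E, paperG d α β (t - s) x z * paperF₀ d α β s z y)
      (Set.Ioc (0:ℝ) t) := by
  have hα : 0 < α := hβ.trans hβα
  set J := ∫ w : E, (max 1 ‖w‖) ^ (-((d:ℝ) + β)) with hJdef
  have hJ0 : 0 ≤ J :=
    integral_nonneg fun w => Real.rpow_nonneg (le_trans zero_le_one (le_max_left _ _)) _
  -- joint measurability
  have hmeas : Measurable (fun q : ℝ × E =>
      paperG d α β (t - q.1) x q.2 * paperF₀ d α β q.1 q.2 y) := by
    unfold paperG paperF₀
    apply Measurable.mul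
    · refine Measurable.ite ?_ ?_ ?_
      · exact measurableSet_le (by fun_prop) ((measurable_const.sub measurable_fst).pow
          measurable_const)
      · exact (measurable_const.sub measurable_fst).pow measurable_const
      · refine Measurable.add ?_ ?_ <;>
          exact (measurable_const.sub measurable_fst).div
            ((by fun_prop : Measurable fun q : ℝ × E => dist x q.2).pow measurable_const)
    · exact ((measurable_fst.pow measurable_const).max
        (by fun_prop : Measurable fun q : ℝ × E => dist q.2 y)).pow measurable_const
  -- section integrability
  have hsec : ∀ s ∈ Set.Ioo (0:ℝ) t, Integrable
      (fun z : E => paperG d α β (t - s) x z * paperF₀ d α β s z y) := by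
    intro s hs
    have hts0 : 0 < t - s := sub_pos.2 hs.2
    have hts1 : t - s ≤ 1 := by linarith [hs.1]
    have hmono := (paperF₀_int hβ hα hs.1 y).1.const_mul (2 * (t - s) ^ (-(d:ℝ)/α))
    refine hmono.mono' ((hmeas.comp (measurable_prodMk_left (x := s))).aestronglyMeasurable)
      (ae_of_all _ fun z => ?_)
    rw [Real.norm_eq_abs, abs_of_nonneg (mul_nonneg (paperG_nonneg hts0.le _ _)
      (paperF₀_nonneg _ _ _))]
    exact mul_le_mul_of_nonneg_right (paperG_le' hβ hβα hts0 hts1 x z)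
      (paperF₀_nonneg _ _ _)
  refine ⟨hsec, ?_⟩
  -- nonnegativity of G
  have hGnn : ∀ s ∈ Set.Ioc (0:ℝ) t,
      0 ≤ ∫ z : E, paperG d α β (t - s) x z * paperF₀ d α β s z y := by
    intro s hs
    exact integral_nonneg fun z => mul_nonneg (paperG_nonneg (by linarith [hs.2]) _ _)
      (paperF₀_nonneg _ _ _)
  -- pointwise bound for G on Ioo
  set c₂ : ℝ := ((t/2) ^ (1/α)) ^ (-((d:ℝ) + β)) with hc₂def
  have hc₂0 : 0 ≤ c₂ := Real.rpow_nonneg (Real.rpow_nonneg (by linarith) _) _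
  have hGbdd : ∀ s ∈ Set.Ioo (0:ℝ) t,
      (∫ z : E, paperG d α β (t - s) x z * paperF₀ d α β s z y)
        ≤ 2 * (t/2) ^ (-(d:ℝ)/α) * J * s ^ (-(β/α)) + 2 * c₂ * J := by
    intro s hs
    have hts0 : 0 < t - s := sub_pos.2 hs.2
    have hts1 : t - s ≤ 1 := by linarith [hs.1]
    have ht2 : (0:ℝ) < t/2 := by linarith
    rcases le_or_gt s (t/2) with hcase | hcase
    · -- small s : bound g by constant
      have hgb : ∀ z : E, paperG d α β (t - s) x z ≤ 2 * (t/2) ^ (-(d:ℝ)/α) := by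
        intro z
        refine (paperG_le' hβ hβα hts0 hts1 x z).trans ?_
        have : (t - s) ^ (-(d:ℝ)/α) ≤ (t/2) ^ (-(d:ℝ)/α) :=
          Real.rpow_le_rpow_of_nonpos ht2 (by linarith)
            (by rw [neg_div]; exact neg_nonpos.2 (by positivity))
        linarith
      have hint := (paperF₀_int hβ hα hs.1 y).1.const_mul (2 * (t/2) ^ (-(d:ℝ)/α))
      have step : (∫ z : E, paperG d α β (t - s) x z * paperF₀ d α β s z y)
          ≤ ∫ z : E, 2 * (t/2) ^ (-(d:ℝ)/α) * paperF₀ d α β s z y := by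
        refine integral_mono_of_nonneg (ae_of_all _ fun z => mul_nonneg
          (paperG_nonneg hts0.le _ _) (paperF₀_nonneg _ _ _)) hint
          (ae_of_all _ fun z => ?_)
        exact mul_le_mul_of_nonneg_right (hgb z) (paperF₀_nonneg _ _ _)
      refine step.trans ?_
      rw [integral_const_mul, (paperF₀_int hβ hα hs.1 y).2]
      have : 2 * (t/2) ^ (-(d:ℝ)/α) * (s ^ (-(β/α)) * J)
          = 2 * (t/2) ^ (-(d:ℝ)/α) * J * s ^ (-(β/α)) := by ring
      rw [this]
      nlinarith [mul_nonneg hc₂0 hJ0]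
    · -- large s : bound f₀ by constant
      have hfb : ∀ z : E, paperF₀ d α β s z y ≤ c₂ := by
        intro z
        unfold paperF₀
        have h1 : ((s:ℝ)) ^ (1/α) ≤ max (s ^ (1/α)) (dist z y) := le_max_left _ _
        have h2 : ((t/2):ℝ) ^ (1/α) ≤ s ^ (1/α) :=
          Real.rpow_le_rpow ht2.le hcase.le (by positivity)
        exact Real.rpow_le_rpow_of_nonpos (Real.rpow_pos_of_pos ht2 _)
          (h2.trans h1) (neg_nonpos.2 (by positivity))
      have hint := (paperF₀_int hβ hα hts0 x).1.const_mul (2 * (t - s) ^ (β/α) * c₂)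
      have step : (∫ z : E, paperG d α β (t - s) x z * paperF₀ d α β s z y)
          ≤ ∫ z : E, 2 * (t - s) ^ (β/α) * c₂ * paperF₀ d α β (t - s) z x := by
        refine integral_mono_of_nonneg (ae_of_all _ fun z => mul_nonneg
          (paperG_nonneg hts0.le _ _) (paperF₀_nonneg _ _ _)) hint
          (ae_of_all _ fun z => ?_)
        calc paperG d α β (t - s) x z * paperF₀ d α β s z y
            ≤ paperG d α β (t - s) x z * c₂ := mul_le_mul_of_nonneg_left (hfb z)
              (paperG_nonneg hts0.le _ _)
          _ ≤ (2 * (t - s) ^ (β/α) * paperF₀ d α β (t - s) z x) * c₂ :=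
              mul_le_mul_of_nonneg_right (paperG_le hβ hβα hts0 hts1 x z) hc₂0
          _ = 2 * (t - s) ^ (β/α) * c₂ * paperF₀ d α β (t - s) z x := by ring
      refine step.trans ?_
      rw [integral_const_mul, (paperF₀_int hβ hα hts0 x).2]
      have key : 2 * (t - s) ^ (β/α) * c₂ * ((t - s) ^ (-(β/α)) * J) = 2 * c₂ * J := by
        have : (t - s) ^ (β/α) * (t - s) ^ (-(β/α)) = 1 := by
          rw [← Real.rpow_add hts0]
          simp
        calc 2 * (t - s) ^ (β/α) * c₂ * ((t - s) ^ (-(β/α)) * J)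
            = 2 * c₂ * J * ((t - s) ^ (β/α) * (t - s) ^ (-(β/α))) := by ring
          _ = 2 * c₂ * J := by rw [this, mul_one]
      rw [key]
      have h0 : 0 ≤ 2 * (t/2) ^ (-(d:ℝ)/α) * J * s ^ (-(β/α)) :=
        mul_nonneg (mul_nonneg (mul_nonneg (by norm_num)
          (Real.rpow_nonneg (by linarith) _)) hJ0) (Real.rpow_nonneg hs.1.le _)
      linarith
  -- B integrable on Ioc
  have hBint : IntegrableOn
      (fun s : ℝ => 2 * (t/2) ^ (-(d:ℝ)/α) * J * s ^ (-(β/α)) + 2 * c₂ * J)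
      (Set.Ioc (0:ℝ) t) := by
    have h1 : IntegrableOn (fun s : ℝ => s ^ (-(β/α))) (Set.Ioc (0:ℝ) t) := by
      have hr : (-1:ℝ) < -(β/α) := by
        have : β/α < 1 := (div_lt_one hα).2 hβα
        linarith
      have := intervalIntegral.intervalIntegrable_rpow' (a := 0) (b := t) hr
      rwa [intervalIntegrable_iff, Set.uIoc_of_le ht.le] at this
    exact (h1.const_mul _).add (integrableOn_const measure_Ioc_lt_top.ne)
  -- measurability of G
  have hGsm : StronglyMeasurable
      (fun s => ∫ z : E, paperG d α β (t - s) x z * paperF₀ d α β s z y) :=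
    hmeas.stronglyMeasurable.integral_prod_right'
  -- ae membership in Ioo
  have hae : ∀ᵐ s ∂(volume.restrict (Set.Ioc (0:ℝ) t)), s ∈ Set.Ioo (0:ℝ) t := by
    have h2 : ∀ᵐ s ∂(volume.restrict (Set.Ioc (0:ℝ) t)), s ∈ Set.Ioc (0:ℝ) t :=
      ae_restrict_mem measurableSet_Ioc
    have h3 : ∀ᵐ s : ℝ, s ∉ ({t} : Set ℝ) := (Set.countable_singleton t).ae_notMem _
    have h3' : ∀ᵐ s ∂(volume.restrict (Set.Ioc (0:ℝ) t)), s ∉ ({t} : Set ℝ) :=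
      ae_restrict_of_ae h3
    filter_upwards [h2, h3'] with s hs hne
    exact ⟨hs.1, lt_of_le_of_ne hs.2 (by simpa using hne)⟩
  refine hBint.mono' hGsm.aestronglyMeasurable.restrict ?_
  filter_upwards [hae] with s hs
  rw [Real.norm_eq_abs, abs_of_nonneg (hGnn s ⟨hs.1, hs.2.le⟩)]
  exact hGbdd s hs

end Aux

/-- Lemma 3.1 of the paper: the iterated kernels `qₙ^b` built from `p₀` and the
nonlocal perturbation `S^b` satisfy `|qₙ^b(t,x,y)| ≤ C Kⁿ g(t,x,y)` on `(0,1]`. -/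
theorem iterated_kernel_bound (d : ℕ) (hd : 1 ≤ d) (α β : ℝ)
    (hβ : 0 < β) (hβα : β < α) (hα : α < 2)
    (Aβ B C₇ Cg C' : ℝ) (hAβ : 0 < Aβ) (hB : 0 ≤ B)
    (hC₇ : 0 < C₇) (hCg : 0 < Cg) (hC' : 0 < C')
    (b : EuclideanSpace ℝ (Fin d) → EuclideanSpace ℝ (Fin d) → ℝ)
    (hbm : Measurable (Function.uncurry b))
    (hbb : ∀ x z, |b x z| ≤ B) (hbsym : ∀ x z, b x z = b x (-z))
    (p₀ Sb : ℝ → EuclideanSpace ℝ (Fin d) → EuclideanSpace ℝ (Fin d) → ℝ)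
    (hSbdef : ∀ s > (0:ℝ), ∀ z y : EuclideanSpace ℝ (Fin d),
      Filter.Tendsto
        (fun ε : ℝ => Aβ * ∫ w in {w : EuclideanSpace ℝ (Fin d) | ε < ‖w‖},
            (p₀ s (z + w) y - p₀ s z y) * b z w / ‖w‖ ^ ((d : ℝ) + β))
        (nhdsWithin 0 (Set.Ioi 0)) (nhds (Sb s z y)))
    (hSb : ∀ s > (0:ℝ), ∀ z y : EuclideanSpace ℝ (Fin d),
      |Sb s z y| ≤ C₇ * B * paperF₀ d α β s z y)
    (hp₀ : ∀ t > (0:ℝ), ∀ x y : EuclideanSpace ℝ (Fin d),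
      0 ≤ p₀ t x y ∧ p₀ t x y ≤ Cg * paperG d α β t x y)
    (hconv : ∀ t ∈ Set.Ioc (0:ℝ) 1, ∀ x y : EuclideanSpace ℝ (Fin d),
      (∫ s in Set.Ioc (0:ℝ) t, ∫ z : EuclideanSpace ℝ (Fin d),
          paperG d α β (t - s) x z * paperF₀ d α β s z y) ≤ C' * paperG d α β t x y)
    (q : ℕ → ℝ → EuclideanSpace ℝ (Fin d) → EuclideanSpace ℝ (Fin d) → ℝ)
    (hq0 : ∀ t x y, q 0 t x y = p₀ t x y)
    (hqn : ∀ n t x y, q (n + 1) t x y =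
      ∫ s in Set.Ioc (0:ℝ) t, ∫ z : EuclideanSpace ℝ (Fin d),
        q n (t - s) x z * Sb s z y) :
    ∃ C > (0:ℝ), ∃ K > (0:ℝ), ∀ n : ℕ, ∀ t ∈ Set.Ioc (0:ℝ) 1,
      ∀ x y : EuclideanSpace ℝ (Fin d),
      |q n t x y| ≤ C * K ^ n * paperG d α β t x y := by
  have hα0 : 0 < α := hβ.trans hβα
  refine ⟨Cg, hCg, C₇ * B * C' + 1, by positivity, ?_⟩
  set K : ℝ := C₇ * B * C' + 1 with hKdef
  have hK0 : 0 < K := by positivity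
  intro n
  induction n with
  | zero =>
    intro t ht x y
    rw [hq0]
    obtain ⟨h0, h1⟩ := hp₀ t ht.1 x y
    rw [abs_of_nonneg h0]
    simpa using h1
  | succ n IH =>
    intro t ht x y
    obtain ⟨ht0, ht1⟩ := ht
    obtain ⟨hsec, hGint⟩ := G_props (d := d) hβ hβα ht0 ht1 x y
    set M : ℝ := Cg * K ^ n * (C₇ * B) with hMdef
    have hM0 : 0 ≤ M :=
      mul_nonneg (mul_nonneg hCg.le (pow_nonneg hK0.le n)) (mul_nonneg hC₇.le hB)
    set G : ℝ → ℝ := fun s => ∫ z : EuclideanSpace ℝ (Fin d),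
      paperG d α β (t - s) x z * paperF₀ d α β s z y with hGdef
    set F : ℝ → ℝ := fun s => ∫ z : EuclideanSpace ℝ (Fin d),
      q n (t - s) x z * Sb s z y with hFdef
    -- ae membership of Ioo
    have hae : ∀ᵐ s ∂(volume.restrict (Set.Ioc (0:ℝ) t)), s ∈ Set.Ioo (0:ℝ) t := by
      have h2 : ∀ᵐ s ∂(volume.restrict (Set.Ioc (0:ℝ) t)), s ∈ Set.Ioc (0:ℝ) t :=
        ae_restrict_mem measurableSet_Ioc
      have h3 : ∀ᵐ s : ℝ, s ∉ ({t} : Set ℝ) := (Set.countable_singleton t).ae_notMem _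
      filter_upwards [h2, ae_restrict_of_ae h3] with s hs hne
      exact ⟨hs.1, lt_of_le_of_ne hs.2 (by simpa using hne)⟩
    have step1 : |∫ s in Set.Ioc (0:ℝ) t, F s| ≤ ∫ s in Set.Ioc (0:ℝ) t, ‖F s‖ := by
      rw [← Real.norm_eq_abs]
      exact norm_integral_le_integral_norm _
    have step2 : (∫ s in Set.Ioc (0:ℝ) t, ‖F s‖) ≤ ∫ s in Set.Ioc (0:ℝ) t, M * G s := by
      refine integral_mono_of_nonneg (ae_of_all _ fun s => norm_nonneg _)
        (hGint.const_mul M) ?_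
      filter_upwards [hae] with s hs
      have hts0 : 0 < t - s := sub_pos.2 hs.2
      have hts1 : t - s ≤ 1 := by linarith [hs.1]
      have i1 : ‖F s‖ ≤ ∫ z : EuclideanSpace ℝ (Fin d), ‖q n (t - s) x z * Sb s z y‖ :=
        norm_integral_le_integral_norm _
      have i2 : (∫ z : EuclideanSpace ℝ (Fin d), ‖q n (t - s) x z * Sb s z y‖)
          ≤ ∫ z : EuclideanSpace ℝ (Fin d),
              M * (paperG d α β (t - s) x z * paperF₀ d α β s z y) := by
        refine integral_mono_of_nonneg (ae_of_all _ fun z => norm_nonneg _)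
          ((hsec s hs).const_mul M) (ae_of_all _ fun z => ?_)
        show ‖q n (t - s) x z * Sb s z y‖
          ≤ M * (paperG d α β (t - s) x z * paperF₀ d α β s z y)
        rw [Real.norm_eq_abs, abs_mul]
        have b1 := IH (t - s) ⟨hts0, hts1⟩ x z
        have b2 := hSb s hs.1 z y
        calc |q n (t - s) x z| * |Sb s z y|
            ≤ (Cg * K ^ n * paperG d α β (t - s) x z) * (C₇ * B * paperF₀ d α β s z y) := by
              refine mul_le_mul b1 b2 (abs_nonneg _) ?_
              exact mul_nonneg (mul_nonneg hCg.le (pow_nonneg hK0.le n))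
                (paperG_nonneg hts0.le _ _)
          _ = M * (paperG d α β (t - s) x z * paperF₀ d α β s z y) := by
              rw [hMdef]; ring
      have i3 : (∫ z : EuclideanSpace ℝ (Fin d),
          M * (paperG d α β (t - s) x z * paperF₀ d α β s z y)) = M * G s :=
        integral_const_mul _ _
      calc ‖F s‖ ≤ _ := i1
        _ ≤ _ := i2
        _ = M * G s := i3
    have step3 : (∫ s in Set.Ioc (0:ℝ) t, M * G s) = M * ∫ s in Set.Ioc (0:ℝ) t, G s :=
      integral_const_mul _ _
    have step4 : (∫ s in Set.Ioc (0:ℝ) t, G s) ≤ C' * paperG d α β t x y :=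
      hconv t ⟨ht0, ht1⟩ x y
    rw [hqn]
    calc |∫ s in Set.Ioc (0:ℝ) t, F s|
        ≤ ∫ s in Set.Ioc (0:ℝ) t, ‖F s‖ := step1
      _ ≤ ∫ s in Set.Ioc (0:ℝ) t, M * G s := step2
      _ = M * ∫ s in Set.Ioc (0:ℝ) t, G s := step3
      _ ≤ M * (C' * paperG d α β t x y) := mul_le_mul_of_nonneg_left step4 hM0
      _ ≤ Cg * K ^ (n+1) * paperG d α β t x y := by
          have hKB : C₇ * B * C' ≤ K := by rw [hKdef]; linarith
          have hg0 := paperG_nonneg (d := d) (α := α) (β := β) ht0.le x y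
          have : M * C' ≤ Cg * K ^ (n+1) := by
            rw [hMdef, pow_succ]
            calc Cg * K ^ n * (C₇ * B) * C' = Cg * K ^ n * (C₇ * B * C') := by ring
              _ ≤ Cg * K ^ n * K := mul_le_mul_of_nonneg_left hKB
                  (mul_nonneg hCg.le (pow_nonneg hK0.le n))
              _ = Cg * (K ^ n * K) := by ring
          calc M * (C' * paperG d α β t x y) = (M * C') * paperG d α β t x y := by ring
            _ ≤ Cg * K ^ (n+1) * paperG d α β t x y :=
                mul_le_mul_of_nonneg_right this hg0
end
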